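/- Assume conditions (A1) and (A3). Let (ρ1, C) be a memoryless sequential strategy and let P denote its generated statistics. Then the reconstructed Choi matrix recovers C exactly: Ĉ[P] = C. -/

import Mathlib

open Matrix Kronecker ComplexOrder BigOperators

noncomputable section

/-- The rank-one projection |v⟩⟨v| associated with a vector v ∈ ℂ^d. -/
def outer {d : ℕ} (v : Fin d → ℂ) : Matrix (Fin d) (Fin d) ℂ :=
  Matrix.vecMulVec v (star v)

/-- Partial trace over the first tensor factor. -/
def ptrace1 {d : ℕ} (C : Matrix (Fin d × Fin d) (Fin d × Fin d) ℂ) :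
    Matrix (Fin d) (Fin d) ℂ :=
  Matrix.of fun j j' => ∑ i : Fin d, C (i, j) (i, j')

/-- Partial trace over the second tensor factor. -/
def ptrace2 {d : ℕ} (C : Matrix (Fin d × Fin d) (Fin d × Fin d) ℂ) :
    Matrix (Fin d) (Fin d) ℂ :=
  Matrix.of fun i i' => ∑ j : Fin d, C (i, j) (i', j)

/-- Partial transpose on the first tensor factor. -/
def ptranspose1 {d : ℕ} (C : Matrix (Fin d × Fin d) (Fin d × Fin d) ℂ) :
    Matrix (Fin d × Fin d) (Fin d × Fin d) ℂ :=
  Matrix.of fun p q => C (q.1, p.2) (p.1, q.2)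

/-- The channel Λ_C(ρ) := Tr₁[C^{T1}(ρ⊗I)] associated with a Choi matrix C. -/
def chan {d : ℕ} (C : Matrix (Fin d × Fin d) (Fin d × Fin d) ℂ)
    (ρ : Matrix (Fin d) (Fin d) ℂ) : Matrix (Fin d) (Fin d) ℂ :=
  ptrace1 (ptranspose1 C * (ρ ⊗ₖ (1 : Matrix (Fin d) (Fin d) ℂ)))

/-- The family G_t: G_0 = I and G_{(y,z)} = Σ_x g_{x|y,z}·E_{x|y}. -/
def Gfam {d : ℕ} {Y : Type*} [Fintype Y] (w : Y → Fin d → Fin d → ℂ)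
    (g : Y → Fin d → Fin (d - 1) → ℝ) : Option (Y × Fin (d - 1)) → Matrix (Fin d) (Fin d) ℂ
  | none => 1
  | some (y, z) => ∑ x : Fin d, (g y x z : ℂ) • outer (w y x)

/-- The coefficients g_{x|t}, with g_{x|0} := 1. -/
def gfam {d : ℕ} {Y : Type*} (g : Y → Fin d → Fin (d - 1) → ℝ) :
    Option (Y × Fin (d - 1)) → Fin d → ℝ
  | none, _ => 1
  | some (y, z), x => g y x z

/-- The measurement label y(t), with y(0) replaced by a fixed element y₀. -/
def yOf {d : ℕ} {Y : Type*} (y₀ : Y) : Option (Y × Fin (d - 1)) → Y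
  | none => y₀
  | some (y, _) => y

/-- Single-site statistics P(x1|y1) = ⟨x1,y1|ρ1|x1,y1⟩. -/
def P1 {d : ℕ} {Y : Type*} (w : Y → Fin d → Fin d → ℂ) (ρ1 : Matrix (Fin d) (Fin d) ℂ)
    (x1 : Fin d) (y1 : Y) : ℂ :=
  star (w y1 x1) ⬝ᵥ ρ1.mulVec (w y1 x1)

/-- Two-site statistics P(x2|x1,y1,y2) = ⟨x2,y2|Λ_C(|x1,y1⟩⟨x1,y1|)|x2,y2⟩. -/
def P2 {d : ℕ} {Y : Type*} (w : Y → Fin d → Fin d → ℂ)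
    (C : Matrix (Fin d × Fin d) (Fin d × Fin d) ℂ)
    (x2 : Fin d) (y2 : Y) (x1 : Fin d) (y1 : Y) : ℂ :=
  star (w y2 x2) ⬝ᵥ (chan C (outer (w y1 x1))).mulVec (w y2 x2)

/-- Statistics with trivial first measurement: P(x2|0,y2) = ⟨x2,y2|Λ_C(ρ1)|x2,y2⟩. -/
def P20 {d : ℕ} {Y : Type*} (w : Y → Fin d → Fin d → ℂ)
    (ρ1 : Matrix (Fin d) (Fin d) ℂ) (C : Matrix (Fin d × Fin d) (Fin d × Fin d) ℂ)
    (x2 : Fin d) (y2 : Y) : ℂ :=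
  star (w y2 x2) ⬝ᵥ (chan C ρ1).mulVec (w y2 x2)

/-- The reconstructed Choi matrix Ĉ[P] built from abstract statistics
(p1, p2, p20), the coefficients g, the dual basis H, and a fixed label y₀. -/
def ChatP {d : ℕ} {Y : Type*} [Fintype Y] [DecidableEq Y] (y₀ : Y)
    (g : Y → Fin d → Fin (d - 1) → ℝ)
    (H : Option (Y × Fin (d - 1)) → Matrix (Fin d) (Fin d) ℂ)
    (p1 : Fin d → Y → ℂ)
    (p2 : Fin d → Y → Fin d → Y → ℂ)
    (p20 : Fin d → Y → ℂ) : Matrix (Fin d × Fin d) (Fin d × Fin d) ℂ :=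
  (∑ t1 : Y × Fin (d - 1), ∑ t2 : Option (Y × Fin (d - 1)),
      (∑ x1 : Fin d, ∑ x2 : Fin d,
          (g t1.1 x1 t1.2 : ℂ) * (gfam g t2 x2 : ℂ) * p2 x2 (yOf y₀ t2) x1 t1.1)
        • ((H (some t1)).transpose ⊗ₖ H t2))
  + (∑ t2 : Option (Y × Fin (d - 1)),
      ((∑ x2 : Fin d, (gfam g t2 x2 : ℂ) * p20 x2 (yOf y₀ t2))
        - ∑ t1 : Y × Fin (d - 1), ∑ t1' : Y × Fin (d - 1),
            (∑ x1 : Fin d, (g t1.1 x1 t1.2 : ℂ) * p1 x1 t1.1)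
              * (H (some t1) * H (some t1')).trace
              * (∑ x1' : Fin d, ∑ x2 : Fin d,
                  (g t1'.1 x1' t1'.2 : ℂ) * (gfam g t2 x2 : ℂ) * p2 x2 (yOf y₀ t2) x1' t1'.1))
        • ((1 : Matrix (Fin d) (Fin d) ℂ) ⊗ₖ H t2))

end

/-- under (A1) and (A3), for a memoryless sequential strategy (ρ1, C),
the reconstructed Choi matrix from the generated statistics recovers C exactly. -/
lemma trace_chan {d : ℕ} (C : Matrix (Fin d × Fin d) (Fin d × Fin d) ℂ)
    (A B : Matrix (Fin d) (Fin d) ℂ) :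
    (B * chan C A).trace = ((A.transpose ⊗ₖ B) * C).trace := by
  simp only [Matrix.trace, Matrix.diag, Matrix.mul_apply, chan, ptrace1, ptranspose1,
    Matrix.of_apply, Matrix.kroneckerMap_apply, Matrix.one_apply, Fintype.sum_prod_type,
    Matrix.transpose_apply, Finset.mul_sum, Finset.sum_mul]
  simp only [mul_ite, ite_mul, mul_zero, zero_mul, Finset.sum_ite_eq, Finset.sum_ite_eq',
    Finset.mem_univ, if_true]
  conv_lhs => enter [2, j]; rw [Finset.sum_comm]
  conv_lhs => enter [2, j, 2, i]; rw [Finset.sum_comm]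
  conv_lhs => rw [Finset.sum_comm]
  congr 1; ext i; congr 1; ext j; congr 1; ext k; congr 1; ext l
  ring
lemma trace_mul_outer {d : ℕ} (M : Matrix (Fin d) (Fin d) ℂ) (v : Fin d → ℂ) :
    (M * outer v).trace = star v ⬝ᵥ M.mulVec v := by
  simp only [Matrix.trace, Matrix.diag, Matrix.mul_apply, outer, Matrix.vecMulVec_apply,
    dotProduct, Matrix.mulVec, Pi.star_apply, Finset.mul_sum]
  congr 1; ext j; congr 1; ext i; ring

lemma sum_outer_eq_one {d : ℕ} (v : Fin d → Fin d → ℂ)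
    (horth : ∀ x x', star (v x) ⬝ᵥ v x' = if x = x' then 1 else 0) :
    ∑ x, outer (v x) = 1 := by
  set S : Matrix (Fin d) (Fin d) ℂ := Matrix.of fun x i => (starRingEnd ℂ) (v x i) with hS
  set B : Matrix (Fin d) (Fin d) ℂ := Matrix.of v with hB
  have h1 : S * B.transpose = 1 := by
    ext x x'
    simpa [S, B, Matrix.mul_apply, Matrix.one_apply, dotProduct] using horth x x'
  have h2 : B.transpose * S = 1 := mul_eq_one_comm.mp h1
  ext i j
  have := congrFun (congrFun h2 i) j
  simp only [Matrix.mul_apply, S, B, Matrix.of_apply, Matrix.transpose_apply] at this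
  simp only [Matrix.sum_apply, outer, Matrix.vecMulVec_apply, Pi.star_apply]
  exact this

section Expand

variable {d : ℕ} {Y : Type*} [Fintype Y] [DecidableEq Y]
  (w : Y → Fin d → Fin d → ℂ) (g : Y → Fin d → Fin (d - 1) → ℝ)
  (H : Option (Y × Fin (d - 1)) → Matrix (Fin d) (Fin d) ℂ)

lemma expand_all
    (hcomplete : ∀ M : Matrix (Fin d) (Fin d) ℂ, M.IsHermitian →
      M = ∑ t : Option (Y × Fin (d - 1)), (Gfam w g t * M).trace • H t)
    (M : Matrix (Fin d) (Fin d) ℂ) :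
    M = ∑ t : Option (Y × Fin (d - 1)), (Gfam w g t * M).trace • H t := by
  set A : Matrix (Fin d) (Fin d) ℂ := ((1 : ℂ)/2) • (M + M.conjTranspose) with hA
  set B : Matrix (Fin d) (Fin d) ℂ := (-Complex.I/2) • (M - M.conjTranspose) with hB
  have hAh : A.IsHermitian := by
    ext i j
    simp only [A, Matrix.conjTranspose_apply, Matrix.smul_apply, Matrix.add_apply,
      smul_eq_mul, star_mul', map_add, Complex.star_def, Complex.conj_conj, map_div₀,
      _root_.map_one, map_ofNat]
    ring
  have hBh : B.IsHermitian := by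
    ext i j
    simp only [B, Matrix.conjTranspose_apply, Matrix.smul_apply, Matrix.sub_apply,
      smul_eq_mul, star_mul', map_sub, map_div₀, map_neg, Complex.star_def,
      Complex.conj_conj, Complex.conj_I, _root_.map_one, map_ofNat]
    ring
  have hM : M = A + Complex.I • B := by
    unfold A B
    rw [smul_smul]
    have : Complex.I * (-Complex.I/2) = 1/2 := by
      field_simp
      simp
    rw [this]
    module
  calc M = A + Complex.I • B := hM
    _ = (∑ t, (Gfam w g t * A).trace • H t) + Complex.I • ∑ t, (Gfam w g t * B).trace • H t := by
        rw [← hcomplete A hAh, ← hcomplete B hBh]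
    _ = ∑ t, (Gfam w g t * M).trace • H t := by
        rw [Finset.smul_sum, ← Finset.sum_add_distrib]
        congr 1; ext t
        rw [smul_smul, ← add_smul]
        congr 1
        rw [hM, Matrix.mul_add, Matrix.mul_smul, Matrix.trace_add, Matrix.trace_smul]
        simp

lemma expand_dual
    (hdual : ∀ t t', (Gfam w g t' * H t).trace = if t = t' then 1 else 0)
    (hcomplete : ∀ M : Matrix (Fin d) (Fin d) ℂ, M.IsHermitian →
      M = ∑ t : Option (Y × Fin (d - 1)), (Gfam w g t * M).trace • H t)
    (M : Matrix (Fin d) (Fin d) ℂ) :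
    M = ∑ t : Option (Y × Fin (d - 1)), (H t * M).trace • Gfam w g t := by
  set N : Matrix (Fin d) (Fin d) ℂ := M - ∑ t, (H t * M).trace • Gfam w g t with hN
  have hHN : ∀ s, (H s * N).trace = 0 := by
    intro s
    unfold N
    rw [Matrix.mul_sub, Matrix.trace_sub, Matrix.mul_sum, Matrix.trace_sum]
    have : ∀ t, (H s * ((H t * M).trace • Gfam w g t)).trace
        = (H t * M).trace * (if s = t then 1 else 0) := by
      intro t
      rw [Matrix.mul_smul, Matrix.trace_smul, smul_eq_mul, Matrix.trace_mul_comm (H s) (Gfam w g t), hdual]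
    simp only [this, mul_ite, mul_one, mul_zero, Finset.sum_ite_eq, Finset.mem_univ, if_true]
    ring
  have hKN : ∀ K : Matrix (Fin d) (Fin d) ℂ, (K * N).trace = 0 := by
    intro K
    rw [expand_all w g H hcomplete K]
    rw [Matrix.sum_mul, Matrix.trace_sum]
    simp only [Matrix.smul_mul, Matrix.trace_smul, hHN, smul_zero, Finset.sum_const_zero]
  have hN0 : N = 0 := by
    have h0 := hKN N.conjTranspose
    have hexp : (N.conjTranspose * N).trace
        = ((∑ j, ∑ i, (Complex.normSq (N i j) : ℝ) : ℝ) : ℂ) := by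
      push_cast
      simp only [Matrix.trace, Matrix.diag, Matrix.mul_apply, Matrix.conjTranspose_apply]
      congr 1; ext j; congr 1; ext i
      rw [Complex.star_def, ← Complex.normSq_eq_conj_mul_self]
    rw [hexp] at h0
    have hr : (∑ j, ∑ i, Complex.normSq (N i j) : ℝ) = 0 := by exact_mod_cast h0
    have hnn : ∀ i j, N i j = 0 := by
      intro i j
      have := (Finset.sum_eq_zero_iff_of_nonneg (fun j _ => Finset.sum_nonneg
        (fun i _ => Complex.normSq_nonneg _))).mp hr j (Finset.mem_univ j)
      have := (Finset.sum_eq_zero_iff_of_nonneg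
        (fun i _ => Complex.normSq_nonneg _)).mp this i (Finset.mem_univ i)
      exact Complex.normSq_eq_zero.mp this
    ext i j; exact hnn i j
  have := sub_eq_zero.mp hN0
  exact this
  
lemma expand_two
    (hcomplete : ∀ M : Matrix (Fin d) (Fin d) ℂ, M.IsHermitian →
      M = ∑ t : Option (Y × Fin (d - 1)), (Gfam w g t * M).trace • H t)
    (M : Matrix (Fin d × Fin d) (Fin d × Fin d) ℂ) :
    M = ∑ t1 : Option (Y × Fin (d - 1)), ∑ t2 : Option (Y × Fin (d - 1)),
      (((Gfam w g t1).transpose ⊗ₖ Gfam w g t2) * M).trace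
        • ((H t1).transpose ⊗ₖ H t2) := by
  set G := Gfam w g with hG
  set B : Fin d → Fin d → Matrix (Fin d) (Fin d) ℂ :=
    fun i i' => Matrix.of fun j j' => M (i, j) (i', j') with hBdef
  set A : Option (Y × Fin (d - 1)) → Matrix (Fin d) (Fin d) ℂ :=
    fun t2 => Matrix.of fun i i' => (G t2 * B i i').trace with hAdef
  have step1 : ∀ i j i' j', M (i, j) (i', j')
      = ∑ t2, A t2 i i' * H t2 j j' := by
    intro i j i' j'
    have := expand_all w g H hcomplete (B i i')
    have h2 := congrFun (congrFun this j) j'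
    simp only [Matrix.sum_apply, Matrix.smul_apply, smul_eq_mul] at h2
    simpa [B, A] using h2
  have step2 : ∀ t2 i i', A t2 i i'
      = ∑ t1, (G t1 * (A t2).transpose).trace * (H t1).transpose i i' := by
    intro t2 i i'
    have := expand_all w g H hcomplete (A t2).transpose
    have h2 := congrFun (congrFun this i') i
    simp only [Matrix.sum_apply, Matrix.smul_apply, smul_eq_mul] at h2
    calc A t2 i i' = (A t2).transpose i' i := rfl
      _ = _ := by
          rw [h2]
          congr 1
  have step3 : ∀ t1 t2, (G t1 * (A t2).transpose).trace
      = (((G t1).transpose ⊗ₖ G t2) * M).trace := by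
    intro t1 t2
    simp only [Matrix.trace, Matrix.diag, Matrix.mul_apply, Matrix.transpose_apply,
      Matrix.kroneckerMap_apply, A, B, Matrix.of_apply, Fintype.sum_prod_type,
      Finset.mul_sum, Finset.sum_mul]
    conv_lhs => rw [Finset.sum_comm]
    conv_lhs => enter [2, b]; rw [Finset.sum_comm]
    congr 1; ext b; congr 1; ext c; congr 1; ext a; congr 1; ext e
    ring
  ext p q
  obtain ⟨i, j⟩ := p
  obtain ⟨i', j'⟩ := q
  rw [step1 i j i' j']
  rw [Finset.sum_comm]
  simp only [Matrix.sum_apply, Matrix.smul_apply, Matrix.kroneckerMap_apply, smul_eq_mul,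
    Matrix.transpose_apply]
  congr 1; ext t2
  rw [step2 t2 i i', Finset.sum_mul]
  congr 1; ext t1
  rw [step3 t1 t2]
  simp only [Matrix.transpose_apply]
  ring

end Expand
lemma sum_kronecker {d : ℕ} {ι : Type*} (s : Finset ι) (f : ι → Matrix (Fin d) (Fin d) ℂ)
    (B : Matrix (Fin d) (Fin d) ℂ) :
    (∑ i ∈ s, f i) ⊗ₖ B = ∑ i ∈ s, (f i ⊗ₖ B) := by
  ext p q
  simp [Matrix.kroneckerMap_apply, Matrix.sum_apply, Finset.sum_mul]

theorem stmt16 {d : ℕ} (hd : 2 ≤ d) {Y : Type*} [Fintype Y] [DecidableEq Y] (y₀ : Y)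
    (w : Y → Fin d → Fin d → ℂ)
    (g : Y → Fin d → Fin (d - 1) → ℝ)
    (H : Option (Y × Fin (d - 1)) → Matrix (Fin d) (Fin d) ℂ)
    -- (A3): each {|x,y⟩ : x} is an orthonormal basis of ℂ^d, so each E_{x|y} is rank one
    (horth : ∀ y (x x' : Fin d), star (w y x) ⬝ᵥ w y x' = if x = x' then 1 else 0)
    -- each G_{y,z} is traceless
    (htraceless : ∀ y z, (Gfam w g (some (y, z))).trace = 0)
    -- (A1): {I} ∪ {G_{y,z}} is a basis of Herm(d), with dual basis H (Hermitian),
    -- expressed via the trace-duality and expansion properties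
    (hH : ∀ t, (H t).IsHermitian)
    (hdual : ∀ t t', (Gfam w g t' * H t).trace = if t = t' then 1 else 0)
    (hcomplete : ∀ M : Matrix (Fin d) (Fin d) ℂ, M.IsHermitian →
      M = ∑ t : Option (Y × Fin (d - 1)), (Gfam w g t * M).trace • H t)
    -- the memoryless sequential strategy (ρ1, C)
    (ρ1 : Matrix (Fin d) (Fin d) ℂ) (hρ1 : ρ1.PosSemidef) (hρ1tr : ρ1.trace = 1)
    (C : Matrix (Fin d × Fin d) (Fin d × Fin d) ℂ) (hC : C.PosSemidef)
    (hCTP : ptrace2 C = 1) :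
    ChatP y₀ g H (P1 w ρ1) (P2 w C) (P20 w ρ1 C) = C := by
  have hd0 : (d : ℂ) ≠ 0 := by
    have : 0 < d := lt_of_lt_of_le two_pos hd
    exact_mod_cast Nat.cast_ne_zero.mpr this.ne'
  -- the coefficients
  set c : Option (Y × Fin (d - 1)) → Option (Y × Fin (d - 1)) → ℂ :=
    fun t1 t2 => (((Gfam w g t1).transpose ⊗ₖ Gfam w g t2) * C).trace with hc
  -- H none = (1/d) • 1
  have hHnone : H none = ((d : ℂ)⁻¹) • 1 := by
    have h1 := hcomplete 1 Matrix.isHermitian_one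
    rw [Fintype.sum_option] at h1
    simp only [Matrix.mul_one] at h1
    have hz : ∀ s : Y × Fin (d - 1), (Gfam w g (some s)).trace • H (some s) = 0 := by
      intro ⟨y, z⟩
      rw [htraceless y z, zero_smul]
    rw [Finset.sum_eq_zero (fun s _ => hz s), add_zero] at h1
    have htr1 : (Gfam w g none).trace = (d : ℂ) := by
      show (1 : Matrix (Fin d) (Fin d) ℂ).trace = (d : ℂ)
      simp [Matrix.trace_one]
    rw [htr1] at h1
    rw [h1, smul_smul, inv_mul_cancel₀ hd0, one_smul]
  -- trace of H (some s) is zero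
  have htrH : ∀ s, (H (some s)).trace = 0 := by
    intro s
    have := hdual (some s) none
    simp only [reduceCtorEq, if_false] at this
    calc (H (some s)).trace = (Gfam w g none * H (some s)).trace := by
          show _ = ((1 : Matrix (Fin d) (Fin d) ℂ) * _).trace
          rw [Matrix.one_mul]
      _ = 0 := this
  -- G as a g-weighted sum of outer projections
  have hsumG : ∀ t, (∑ x, (gfam g t x : ℂ) • outer (w (yOf y₀ t) x)) = Gfam w g t := by
    intro t
    match t with
    | none =>
      simp only [gfam, yOf, Complex.ofReal_one, one_smul]
      exact sum_outer_eq_one (w y₀) (horth y₀)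
    | some (y, z) => rfl
  -- generic trace-vs-statistics identity
  have keyTr : ∀ (t : Option (Y × Fin (d - 1))) (N : Matrix (Fin d) (Fin d) ℂ),
      (Gfam w g t * N).trace
        = ∑ x, (gfam g t x : ℂ) * (star (w (yOf y₀ t) x) ⬝ᵥ N.mulVec (w (yOf y₀ t) x)) := by
    intro t N
    rw [← hsumG t, Matrix.sum_mul, Matrix.trace_sum]
    congr 1; ext x
    rw [Matrix.smul_mul, Matrix.trace_smul, Matrix.trace_mul_comm, trace_mul_outer]
    simp
  -- keyC : the double statistics sum equals c (some t1) t2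
  have keyC : ∀ (t1 : Y × Fin (d - 1)) (t2 : Option (Y × Fin (d - 1))),
      (∑ x1, ∑ x2, (g t1.1 x1 t1.2 : ℂ) * (gfam g t2 x2 : ℂ)
          * P2 w C x2 (yOf y₀ t2) x1 t1.1)
        = c (some t1) t2 := by
    intro t1 t2
    have hinner : ∀ x1, (∑ x2, (gfam g t2 x2 : ℂ) * P2 w C x2 (yOf y₀ t2) x1 t1.1)
        = (((outer (w t1.1 x1)).transpose ⊗ₖ Gfam w g t2) * C).trace := by
      intro x1
      rw [← trace_chan]
      rw [keyTr t2 (chan C (outer (w t1.1 x1)))]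
      rfl
    calc (∑ x1, ∑ x2, (g t1.1 x1 t1.2 : ℂ) * (gfam g t2 x2 : ℂ)
          * P2 w C x2 (yOf y₀ t2) x1 t1.1)
        = ∑ x1, (g t1.1 x1 t1.2 : ℂ)
            * (((outer (w t1.1 x1)).transpose ⊗ₖ Gfam w g t2) * C).trace := by
          congr 1; ext x1
          rw [← hinner x1, Finset.mul_sum]
          congr 1; ext x2
          ring
      _ = c (some t1) t2 := by
          simp only [hc]
          rw [← hsumG (some t1), Matrix.transpose_sum, sum_kronecker, Matrix.sum_mul,
            Matrix.trace_sum]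
          congr 1; ext x1
          have : ((gfam g (some t1) x1 : ℂ) • outer (w (yOf y₀ (some t1)) x1)).transpose
              = (g t1.1 x1 t1.2 : ℂ) • (outer (w t1.1 x1)).transpose := by
            simp [gfam, yOf, Matrix.transpose_smul]
          rw [this, Matrix.smul_kronecker, Matrix.smul_mul, Matrix.trace_smul]
          simp
  -- keyP1
  have keyP1 : ∀ t1 : Y × Fin (d - 1),
      (∑ x1, (g t1.1 x1 t1.2 : ℂ) * P1 w ρ1 x1 t1.1)
        = (Gfam w g (some t1) * ρ1).trace := by
    intro t1
    rw [keyTr (some t1) ρ1]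
    rfl
  -- keyP20
  have keyP20 : ∀ t2, (∑ x2, (gfam g t2 x2 : ℂ) * P20 w ρ1 C x2 (yOf y₀ t2))
      = (Gfam w g t2 * chan C ρ1).trace := by
    intro t2
    rw [keyTr t2 (chan C ρ1)]
    rfl
  -- expansion of H (some s) in the G basis
  have hHexp : ∀ s : Y × Fin (d - 1), H (some s)
      = ∑ s' : Y × Fin (d - 1),
          (H (some s) * H (some s')).trace • Gfam w g (some s') := by
    intro s
    have h1 := expand_dual w g H hdual hcomplete (H (some s))
    rw [Fintype.sum_option] at h1
    have h2 : (H none * H (some s)).trace • Gfam w g none = 0 := by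
      rw [hHnone, Matrix.smul_mul, Matrix.trace_smul, Matrix.one_mul, htrH s]
      simp
    rw [h2, zero_add] at h1
    conv_lhs => rw [h1]
    exact Finset.sum_congr rfl fun s' _ => by rw [Matrix.trace_mul_comm]
  -- expansion of ρ1
  have hρexp : ρ1 = ((d : ℂ)⁻¹) • 1
      + ∑ t1 : Y × Fin (d - 1), (Gfam w g (some t1) * ρ1).trace • H (some t1) := by
    have h1 := hcomplete ρ1 hρ1.isHermitian
    rw [Fintype.sum_option] at h1
    have h2 : (Gfam w g none * ρ1).trace • H none = ((d : ℂ)⁻¹) • 1 := by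
      have : (Gfam w g none * ρ1).trace = 1 := by
        show ((1 : Matrix (Fin d) (Fin d) ℂ) * ρ1).trace = 1
        rw [Matrix.one_mul, hρ1tr]
      rw [this, one_smul, hHnone]
    rw [h2] at h1
    exact h1
  -- keyρ: the P20-term trace expansion
  have keyρ : ∀ t2, (Gfam w g t2 * chan C ρ1).trace
      = (d : ℂ)⁻¹ * c none t2
        + ∑ t1 : Y × Fin (d - 1), ∑ t1' : Y × Fin (d - 1),
            (Gfam w g (some t1) * ρ1).trace
              * (H (some t1) * H (some t1')).trace * c (some t1') t2 := by
    intro t2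
    rw [trace_chan]
    conv_lhs => rw [hρexp]
    rw [Matrix.transpose_add, Matrix.transpose_smul, Matrix.transpose_one,
      Matrix.add_kronecker, Matrix.smul_kronecker, Matrix.add_mul, Matrix.smul_mul,
      Matrix.trace_add, Matrix.trace_smul]
    congr 1
    · have h1 : (Gfam w g none).transpose = (1 : Matrix (Fin d) (Fin d) ℂ) := by
        rw [show Gfam w g none = (1 : Matrix (Fin d) (Fin d) ℂ) from rfl, Matrix.transpose_one]
      simp only [hc, h1, smul_eq_mul]
    · rw [Matrix.transpose_sum, sum_kronecker, Matrix.sum_mul, Matrix.trace_sum]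
      congr 1; ext t1
      conv_lhs => rw [Matrix.transpose_smul, Matrix.smul_kronecker, Matrix.smul_mul,
        Matrix.trace_smul]
      conv_lhs => rw [hHexp t1]
      rw [Matrix.transpose_sum, sum_kronecker, Matrix.sum_mul, Matrix.trace_sum,
        Finset.smul_sum]
      congr 1; ext t1'
      rw [Matrix.transpose_smul, Matrix.smul_kronecker, Matrix.smul_mul, Matrix.trace_smul]
      simp only [hc, smul_eq_mul]
      ring
  -- final assembly
  conv_rhs => rw [expand_two w g H hcomplete C]
  conv_rhs => rw [Fintype.sum_option]
  unfold ChatP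
  rw [add_comm]
  congr 1
  · -- the none part
    congr 1; ext t2
    rw [keyP20 t2, keyρ t2]
    have hsub : (∑ t1 : Y × Fin (d - 1), ∑ t1' : Y × Fin (d - 1),
        (∑ x1, (g t1.1 x1 t1.2 : ℂ) * P1 w ρ1 x1 t1.1)
          * (H (some t1) * H (some t1')).trace
          * (∑ x1', ∑ x2, (g t1'.1 x1' t1'.2 : ℂ) * (gfam g t2 x2 : ℂ)
              * P2 w C x2 (yOf y₀ t2) x1' t1'.1))
        = ∑ t1 : Y × Fin (d - 1), ∑ t1' : Y × Fin (d - 1),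
            (Gfam w g (some t1) * ρ1).trace
              * (H (some t1) * H (some t1')).trace * c (some t1') t2 := by
      congr 1; ext t1; congr 1; ext t1'
      rw [keyP1 t1, keyC t1' t2]
    rw [hsub]
    rw [add_sub_cancel_right]
    rw [hHnone, Matrix.transpose_smul, Matrix.transpose_one, Matrix.smul_kronecker,
      smul_smul]
    rw [mul_comm (c none t2) ((d : ℂ)⁻¹)]
  · -- the some part
    refine Finset.sum_congr rfl fun t1 _ => Finset.sum_congr rfl fun t2 _ => ?_
    rw [keyC t1 t2]
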